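/- Let n ≥ 4 and r ≥ 4. Set A_i = I₂ = {⌊n/2⌋+1,...,n} for 1 ≤ i ≤ ⌊r/2⌋ and A_i = Odd for ⌊r/2⌋ < i ≤ r. Then g(A₁,...,A_r) ≥ (⌊n/4⌋/n) · log₂(r · ⌊r²/4⌋), where g is defined as g(A₁,...,A_r) = (1/n) Σ_{∅ ≠ I ⊆ [r]} |E_I| log₂|I| with E_I = (∩_{i∈I} A_i) \ (∪_{j∉I} A_j). -/

import Mathlib

open Finset

private lemma count_odd_high (n : ℕ) (hn : 4 ≤ n) :
    n / 4 ≤ ((Finset.Icc 1 n).filter (fun z => n / 2 + 1 ≤ z ∧ z % 2 = 1)).card := by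
  have h := Finset.card_le_card_of_injOn (fun k => 2 * ((n / 2 + 1) / 2) + 2 * k - 1)
    (s := Finset.Icc 1 (n / 4))
    (t := (Finset.Icc 1 n).filter (fun z => n / 2 + 1 ≤ z ∧ z % 2 = 1)) ?_ ?_
  · simpa using h
  · intro k hk
    simp only [Finset.mem_coe, Finset.mem_Icc] at hk
    simp only [Finset.mem_coe, Finset.mem_filter, Finset.mem_Icc]
    omega
  · intro a ha b hb hab
    simp only [Finset.coe_Icc, Set.mem_Icc] at ha hb
    dsimp only at hab
    omega

private lemma count_even_high (n : ℕ) (hn : 4 ≤ n) :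
    n / 4 ≤ ((Finset.Icc 1 n).filter (fun z => n / 2 + 1 ≤ z ∧ z % 2 = 0)).card := by
  have h := Finset.card_le_card_of_injOn (fun k => 2 * (n / 2 / 2) + 2 * k)
    (s := Finset.Icc 1 (n / 4))
    (t := (Finset.Icc 1 n).filter (fun z => n / 2 + 1 ≤ z ∧ z % 2 = 0)) ?_ ?_
  · simpa using h
  · intro k hk
    simp only [Finset.mem_coe, Finset.mem_Icc] at hk
    simp only [Finset.mem_coe, Finset.mem_filter, Finset.mem_Icc]
    omega
  · intro a ha b hb hab
    simp only [Finset.coe_Icc, Set.mem_Icc] at ha hb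
    dsimp only at hab
    omega

private lemma count_odd_low (n : ℕ) (hn : 4 ≤ n) :
    n / 4 ≤ ((Finset.Icc 1 n).filter (fun z => z ≤ n / 2 ∧ z % 2 = 1)).card := by
  have h := Finset.card_le_card_of_injOn (fun k => 2 * k - 1)
    (s := Finset.Icc 1 (n / 4))
    (t := (Finset.Icc 1 n).filter (fun z => z ≤ n / 2 ∧ z % 2 = 1)) ?_ ?_
  · simpa using h
  · intro k hk
    simp only [Finset.mem_coe, Finset.mem_Icc] at hk
    simp only [Finset.mem_coe, Finset.mem_filter, Finset.mem_Icc]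
    omega
  · intro a ha b hb hab
    simp only [Finset.coe_Icc, Set.mem_Icc] at ha hb
    dsimp only at hab
    omega

/-- Taking `A_i = I₂ = {⌊n/2⌋+1,...,n}` for `i ≤ ⌊r/2⌋` and `A_i = Odd`
otherwise, we have `g(A₁,...,A_r) ≥ (⌊n/4⌋/n) · log₂(r⌊r²/4⌋)`, where
`g(A₁,...,A_r) = (1/n) Σ_{∅≠I⊆[r]} |E_I| log₂ |I|`. -/
theorem g_of_mixed_family (n r : ℕ) (hn : 4 ≤ n) (hr : 4 ≤ r) :
    ((((n / 4 : ℕ)) : ℝ) / n) * Real.logb 2 (r * (r ^ 2 / 4 : ℕ)) ≤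
    (1 / (n : ℝ)) *
      ∑ I ∈ Finset.univ.filter (fun I : Finset (Fin r) => I ≠ ∅),
        (((Finset.Icc 1 n).filter (fun z =>
            ∀ i : Fin r,
              (z ∈ (if (i : ℕ) < r / 2 then Finset.Icc (n / 2 + 1) n
                    else (Finset.Icc 1 n).filter (fun k => Odd k)) ↔ i ∈ I))).card : ℝ)
          * Real.logb 2 (I.card) := by
  classical
  set E : Finset (Fin r) → Finset ℕ := fun I => (Finset.Icc 1 n).filter (fun z =>
      ∀ i : Fin r,
        (z ∈ (if (i : ℕ) < r / 2 then Finset.Icc (n / 2 + 1) n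
              else (Finset.Icc 1 n).filter (fun k => Odd k)) ↔ i ∈ I)) with hE
  set S : Finset (Fin r) := Finset.univ.filter (fun i => (i : ℕ) < r / 2) with hS
  have hiS : ∀ i : Fin r, i ∈ S ↔ (i : ℕ) < r / 2 := by
    intro i; simp [hS]
  have hiSc : ∀ i : Fin r, i ∈ Sᶜ ↔ ¬ ((i : ℕ) < r / 2) := by
    intro i; simp [hS]
  -- cardinality bounds on the three relevant E-sets
  have hEuniv : n / 4 ≤ (E Finset.univ).card := by
    refine le_trans (count_odd_high n hn) (Finset.card_le_card ?_)
    intro z hz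
    simp only [Finset.mem_filter, Finset.mem_Icc] at hz
    simp only [hE, Finset.mem_filter, Finset.mem_Icc]
    refine ⟨⟨hz.1.1, hz.1.2⟩, fun i => ?_⟩
    simp only [Finset.mem_univ, iff_true]
    split_ifs with h
    · simp only [Finset.mem_Icc]; omega
    · simp only [Finset.mem_filter, Finset.mem_Icc, Nat.odd_iff]; omega
  have hES : n / 4 ≤ (E S).card := by
    refine le_trans (count_even_high n hn) (Finset.card_le_card ?_)
    intro z hz
    simp only [Finset.mem_filter, Finset.mem_Icc] at hz
    simp only [hE, Finset.mem_filter, Finset.mem_Icc]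
    refine ⟨⟨hz.1.1, hz.1.2⟩, fun i => ?_⟩
    rw [hiS i]
    split_ifs with h
    · simp only [Finset.mem_Icc]; omega
    · simp only [Finset.mem_filter, Finset.mem_Icc, Nat.odd_iff]; omega
  have hESc : n / 4 ≤ (E Sᶜ).card := by
    refine le_trans (count_odd_low n hn) (Finset.card_le_card ?_)
    intro z hz
    simp only [Finset.mem_filter, Finset.mem_Icc] at hz
    simp only [hE, Finset.mem_filter, Finset.mem_Icc]
    refine ⟨⟨hz.1.1, hz.1.2⟩, fun i => ?_⟩
    rw [hiSc i]
    split_ifs with h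
    · simp only [Finset.mem_Icc]; omega
    · simp only [Finset.mem_filter, Finset.mem_Icc, Nat.odd_iff]; omega
  -- cardinalities of the index sets
  have hScard : S.card = r / 2 := by
    have : S = Finset.Iio (⟨r / 2, by omega⟩ : Fin r) := by
      ext i; simp [hS, Fin.lt_def]
    rw [this, Fin.card_Iio]
  have hSccard : Sᶜ.card = r - r / 2 := by
    rw [Finset.card_compl, hScard, Fintype.card_fin]
  have hucard : (Finset.univ : Finset (Fin r)).card = r := by
    rw [Finset.card_univ, Fintype.card_fin]
  -- distinctness and nonemptiness
  have h0S : (⟨0, by omega⟩ : Fin r) ∈ S := by rw [hiS]; simp; omega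
  have h1Sc : (⟨r - 1, by omega⟩ : Fin r) ∈ Sᶜ := by rw [hiSc]; simp; omega
  have hSne : S ≠ ∅ := Finset.ne_empty_of_mem h0S
  have hScne : Sᶜ ≠ ∅ := Finset.ne_empty_of_mem h1Sc
  haveI : Nonempty (Fin r) := ⟨⟨0, by omega⟩⟩
  have hSnu : S ≠ Finset.univ := by
    intro h
    have hm : (⟨r - 1, by omega⟩ : Fin r) ∈ S := by rw [h]; exact Finset.mem_univ _
    exact absurd ((hiS _).mp hm) ((hiSc _).mp h1Sc)
  have hScnu : Sᶜ ≠ Finset.univ := by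
    intro h
    have hm : (⟨0, by omega⟩ : Fin r) ∈ Sᶜ := by rw [h]; exact Finset.mem_univ _
    exact absurd ((hiSc _).mp hm) (not_not.mpr ((hiS _).mp h0S))
  have hSSc : S ≠ Sᶜ := by
    intro h
    have hm : (⟨0, by omega⟩ : Fin r) ∈ Sᶜ := by rw [← h]; exact h0S
    exact absurd ((hiSc _).mp hm) (not_not.mpr ((hiS _).mp h0S))
  -- the three-term subsum
  set f : Finset (Fin r) → ℝ := fun I => ((E I).card : ℝ) * Real.logb 2 (I.card) with hf
  have hT : {(Finset.univ : Finset (Fin r)), S, Sᶜ} ⊆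
      Finset.univ.filter (fun I : Finset (Fin r) => I ≠ ∅) := by
    intro I hI
    simp only [Finset.mem_insert, Finset.mem_singleton] at hI
    simp only [Finset.mem_filter, Finset.mem_univ, true_and]
    rcases hI with h | h | h
    · rw [h]; exact Finset.univ_nonempty.ne_empty
    · rw [h]; exact hSne
    · rw [h]; exact hScne
  have hsub : ∑ I ∈ ({(Finset.univ : Finset (Fin r)), S, Sᶜ} : Finset (Finset (Fin r))), f I ≤
      ∑ I ∈ Finset.univ.filter (fun I : Finset (Fin r) => I ≠ ∅), f I := by
    refine Finset.sum_le_sum_of_subset_of_nonneg hT ?_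
    intro I hI _
    simp only [Finset.mem_filter] at hI
    have h1 : 1 ≤ I.card := Finset.card_pos.mpr (Finset.nonempty_of_ne_empty hI.2)
    refine mul_nonneg (Nat.cast_nonneg _) (Real.logb_nonneg one_lt_two ?_)
    exact_mod_cast h1
  have hsum3 : ∑ I ∈ ({(Finset.univ : Finset (Fin r)), S, Sᶜ} : Finset (Finset (Fin r))), f I =
      f Finset.univ + f S + f Sᶜ := by
    rw [Finset.sum_insert (by simp [hSnu.symm, hScnu.symm]),
      Finset.sum_insert (by simp [hSSc]), Finset.sum_singleton]
    ring
  -- arithmetic on logs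
  have hq : r ^ 2 / 4 = (r / 2) * (r - r / 2) := by
    rcases Nat.even_or_odd r with ⟨q, hq⟩ | ⟨q, hq⟩ <;> subst hq
    · have h1 : (q + q) ^ 2 = 4 * q ^ 2 := by ring
      have h2 : (q + q) / 2 = q := by omega
      rw [h1, h2, Nat.mul_div_cancel_left _ (by norm_num)]
      have : q + q - q = q := by omega
      rw [this, pow_two]
    · have h1 : (2 * q + 1) ^ 2 = 4 * (q ^ 2 + q) + 1 := by ring
      have h2 : (2 * q + 1) / 2 = q := by omega
      have h3 : (4 * (q ^ 2 + q) + 1) / 4 = q ^ 2 + q := by omega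
      rw [h1, h2, h3]
      have : 2 * q + 1 - q = q + 1 := by omega
      rw [this]; ring
  have hr2 : (2 : ℕ) ≤ r / 2 := by omega
  have hr3 : (2 : ℕ) ≤ r - r / 2 := by omega
  have hlog : Real.logb 2 ((r : ℝ) * ((r ^ 2 / 4 : ℕ) : ℝ)) =
      Real.logb 2 (r : ℝ) + Real.logb 2 ((r / 2 : ℕ) : ℝ) +
        Real.logb 2 (((r - r / 2 : ℕ) : ℝ)) := by
    rw [hq]
    push_cast
    rw [← mul_assoc, Real.logb_mul (by positivity) (by positivity),
      Real.logb_mul (by positivity) (by positivity)]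
  -- put everything together
  have hL1 : (0 : ℝ) ≤ Real.logb 2 (r : ℝ) :=
    Real.logb_nonneg one_lt_two (by exact_mod_cast Nat.one_le_iff_ne_zero.mpr (by omega))
  have hL2 : (0 : ℝ) ≤ Real.logb 2 ((r / 2 : ℕ) : ℝ) :=
    Real.logb_nonneg one_lt_two (by exact_mod_cast Nat.one_le_iff_ne_zero.mpr (by omega))
  have hL3 : (0 : ℝ) ≤ Real.logb 2 (((r - r / 2 : ℕ)) : ℝ) :=
    Real.logb_nonneg one_lt_two (by exact_mod_cast Nat.one_le_iff_ne_zero.mpr (by omega))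
  have hnpos : (0 : ℝ) < (n : ℝ) := by exact_mod_cast by omega
  have hgoal : (((n / 4 : ℕ) : ℝ) / n) * Real.logb 2 ((r : ℝ) * ((r ^ 2 / 4 : ℕ) : ℝ)) ≤
      (1 / (n : ℝ)) * (f Finset.univ + f S + f Sᶜ) := by
    rw [hlog, hf]
    simp only [hucard, hScard, hSccard]
    have ha : ((n / 4 : ℕ) : ℝ) ≤ ((E Finset.univ).card : ℝ) := by exact_mod_cast hEuniv
    have hb : ((n / 4 : ℕ) : ℝ) ≤ ((E S).card : ℝ) := by exact_mod_cast hES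
    have hc : ((n / 4 : ℕ) : ℝ) ≤ ((E Sᶜ).card : ℝ) := by exact_mod_cast hESc
    have key : ((n / 4 : ℕ) : ℝ) * (Real.logb 2 (r : ℝ) + Real.logb 2 ((r / 2 : ℕ) : ℝ) +
        Real.logb 2 (((r - r / 2 : ℕ)) : ℝ)) ≤
        ((E Finset.univ).card : ℝ) * Real.logb 2 ((r : ℕ) : ℝ) +
        ((E S).card : ℝ) * Real.logb 2 ((r / 2 : ℕ) : ℝ) +
        ((E Sᶜ).card : ℝ) * Real.logb 2 (((r - r / 2 : ℕ)) : ℝ) := by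
      have t1 := mul_le_mul_of_nonneg_right ha hL1
      have t2 := mul_le_mul_of_nonneg_right hb hL2
      have t3 := mul_le_mul_of_nonneg_right hc hL3
      push_cast at t1 t2 t3 ⊢
      nlinarith
    calc (((n / 4 : ℕ) : ℝ) / n) * (Real.logb 2 (r : ℝ) + Real.logb 2 ((r / 2 : ℕ) : ℝ) +
        Real.logb 2 (((r - r / 2 : ℕ)) : ℝ))
        = (1 / (n : ℝ)) * (((n / 4 : ℕ) : ℝ) * (Real.logb 2 (r : ℝ) +
          Real.logb 2 ((r / 2 : ℕ) : ℝ) + Real.logb 2 (((r - r / 2 : ℕ)) : ℝ))) := by ring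
      _ ≤ _ := by
          apply mul_le_mul_of_nonneg_left _ (by positivity)
          convert key using 2 <;> push_cast <;> ring
  calc (((n / 4 : ℕ) : ℝ) / n) * Real.logb 2 ((r : ℝ) * ((r ^ 2 / 4 : ℕ) : ℝ))
      ≤ (1 / (n : ℝ)) * (f Finset.univ + f S + f Sᶜ) := hgoal
    _ = (1 / (n : ℝ)) * ∑ I ∈ ({(Finset.univ : Finset (Fin r)), S, Sᶜ} : Finset (Finset (Fin r))), f I := by
        rw [hsum3]
    _ ≤ (1 / (n : ℝ)) * ∑ I ∈ Finset.univ.filter (fun I : Finset (Fin r) => I ≠ ∅), f I := by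
        apply mul_le_mul_of_nonneg_left hsub (by positivity)
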